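/- Let d_u, d_v, α, β, γ > 0 with 0 < γ < α, and let f be a bistable nonlinearity that is moreover C¹ on [0,1] with f'(1) < 0. Let η₀ and b₀ be as in the uniqueness proposition for the limit problem, and for each L > b₀ let w₁ = w₁^L be the unique strictly increasing solution of −d_u w₁'' = f(w₁) on (0,L), w₁(0) = γ/α, w₁'(L) = 0, with 0 < w₁ < 1 and w₁(L) > 1 − η₀, and let w₂ = w₂^L be any C² solution of the linear problem d_u w₂'' + f'(w₁) w₂ = (2/L) f(w₁) on (0,L), w₂'(L) = 0, w₂(0) = (1/3) w₁'(0). Then lim_{L→∞} d_u (w₂^L)'(0) = −(1/3) f(γ/α); equivalently, the linear coefficient of the thin-limit expansion of the total predator population satisfies lim_{L→∞} (α/(β γ)) ( d_u (w₂^L)'(0) + f(γ/α) ) = (2/3) (α/(β γ)) f(γ/α). -/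

import Mathlib

open Set Filter

/-- A bistable nonlinearity: continuous on `[0,1]`, zeros exactly `0, θ, 1`,
negative on `(0,θ)`, positive on `(θ,1)`, and with positive total mass. -/
structure Bistable (f : ℝ → ℝ) (θ : ℝ) : Prop where
  cont : ContinuousOn f (Set.Icc 0 1)
  θ_mem : θ ∈ Set.Ioo (0:ℝ) 1
  f0 : f 0 = 0
  fθ : f θ = 0
  f1 : f 1 = 0
  neg : ∀ s ∈ Set.Ioo (0:ℝ) θ, f s < 0
  pos : ∀ s ∈ Set.Ioo θ (1:ℝ), 0 < f s
  int_pos : 0 < ∫ s in (0:ℝ)..1, f s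

/-- `u` (with derivative `u'`) is a C² solution of the limit problem (P_L):
`−d_u u'' = f(u)` on `(0,L)`, `u(0) = p`, `u'(L) = 0`. -/
def IsPL (du p : ℝ) (f : ℝ → ℝ) (L : ℝ) (u u' : ℝ → ℝ) : Prop :=
  (∀ x ∈ Set.Icc 0 L, HasDerivWithinAt u (u' x) (Set.Icc 0 L) x) ∧
  (∀ x ∈ Set.Icc 0 L, HasDerivWithinAt u' (-(f (u x)) / du) (Set.Icc 0 L) x) ∧
  u 0 = p ∧ u' L = 0


lemma aux_hasDerivAt {u u' : ℝ → ℝ} {a b x : ℝ}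
    (h : ∀ y ∈ Icc a b, HasDerivWithinAt u (u' y) (Icc a b) y) (hx : x ∈ Ioo a b) :
    HasDerivAt u (u' x) x :=
  (h x (Ioo_subset_Icc_self hx)).hasDerivAt (Icc_mem_nhds hx.1 hx.2)

lemma aux_contOn {u u' : ℝ → ℝ} {a b : ℝ}
    (h : ∀ y ∈ Icc a b, HasDerivWithinAt u (u' y) (Icc a b) y) :
    ContinuousOn u (Icc a b) :=
  fun x hx => (h x hx).continuousWithinAt

lemma aux_mono {u u' : ℝ → ℝ} {a b : ℝ}
    (h : ∀ y ∈ Icc a b, HasDerivWithinAt u (u' y) (Icc a b) y)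
    (h0 : ∀ x ∈ Ioo a b, 0 ≤ u' x) : MonotoneOn u (Icc a b) := by
  apply monotoneOn_of_deriv_nonneg (convex_Icc a b) (aux_contOn h)
  · intro x hx
    rw [interior_Icc] at hx
    exact (aux_hasDerivAt h hx).differentiableAt.differentiableWithinAt
  · intro x hx
    rw [interior_Icc] at hx
    rw [(aux_hasDerivAt h hx).deriv]
    exact h0 x hx

lemma aux_anti {u u' : ℝ → ℝ} {a b : ℝ}
    (h : ∀ y ∈ Icc a b, HasDerivWithinAt u (u' y) (Icc a b) y)
    (h0 : ∀ x ∈ Ioo a b, u' x ≤ 0) : AntitoneOn u (Icc a b) := by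
  apply antitoneOn_of_deriv_nonpos (convex_Icc a b) (aux_contOn h)
  · intro x hx
    rw [interior_Icc] at hx
    exact (aux_hasDerivAt h hx).differentiableAt.differentiableWithinAt
  · intro x hx
    rw [interior_Icc] at hx
    rw [(aux_hasDerivAt h hx).deriv]
    exact h0 x hx

lemma aux_smono {u u' : ℝ → ℝ} {a b : ℝ}
    (h : ∀ y ∈ Icc a b, HasDerivWithinAt u (u' y) (Icc a b) y)
    (h0 : ∀ x ∈ Ioo a b, 0 < u' x) : StrictMonoOn u (Icc a b) := by
  apply strictMonoOn_of_deriv_pos (convex_Icc a b) (aux_contOn h)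
  intro x hx
  rw [interior_Icc] at hx
  rw [(aux_hasDerivAt h hx).deriv]
  exact h0 x hx

lemma aux_const {u u' : ℝ → ℝ} {a b : ℝ} (hab : a ≤ b)
    (h : ∀ y ∈ Icc a b, HasDerivWithinAt u (u' y) (Icc a b) y)
    (h0 : ∀ x ∈ Ioo a b, u' x = 0) : u b = u a := by
  have h1 := aux_mono h (fun x hx => (h0 x hx).ge)
  have h2 := aux_anti h (fun x hx => (h0 x hx).le)
  have ha : a ∈ Icc a b := ⟨le_refl a, hab⟩
  have hb : b ∈ Icc a b := ⟨hab, le_refl b⟩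
  exact le_antisymm (h2 ha hb hab) (h1 ha hb hab)

/-- Grönwall-type bound for a second order ODE. -/
lemma aux_gronwall {g g' g'' : ℝ → ℝ} {a b C R : ℝ} (hab : a ≤ b) (hC : 0 ≤ C) (hR : 0 ≤ R)
    (hd1 : ∀ x ∈ Icc a b, HasDerivWithinAt g (g' x) (Icc a b) x)
    (hd2 : ∀ x ∈ Icc a b, HasDerivWithinAt g' (g'' x) (Icc a b) x)
    (hbnd : ∀ x ∈ Ioo a b,
      2*(g x*g' x) + 2*(g' x*g'' x) ≤ C*(g x*g x + g' x*g' x) + R) :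
    g b*g b + g' b*g' b ≤ (g a*g a + g' a*g' a + R*(b-a)) * Real.exp (C*(b-a)) := by
  set ρ : ℝ → ℝ := fun x => g x * g x + g' x * g' x with hρdef
  set E : ℝ → ℝ := fun x => Real.exp (-(C*(x-a))) with hEdef
  have hEderiv : ∀ x : ℝ, HasDerivAt E (-(E x * C)) x := by
    intro x
    have h1 : HasDerivAt (fun y : ℝ => -(C*(y-a))) (-C) x := by
      exact (((hasDerivAt_id x).sub_const a).const_mul C).neg.congr_deriv (by simp)
    have h2 := h1.exp
    convert h2 using 1
    simp [hEdef]
  set σ : ℝ → ℝ := fun x => ρ x * E x - R*(x-a) with hσdef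
  have hσderiv : ∀ x ∈ Icc a b, HasDerivWithinAt σ
      ((2*(g x*g' x) + 2*(g' x*g'' x)) * E x + ρ x * (-(E x * C)) - R) (Icc a b) x := by
    intro x hx
    have hρ : HasDerivWithinAt ρ (2*(g x*g' x) + 2*(g' x*g'' x)) (Icc a b) x := by
      have := ((hd1 x hx).mul (hd1 x hx)).add ((hd2 x hx).mul (hd2 x hx))
      refine this.congr_deriv ?_
      ring
    have hlin : HasDerivWithinAt (fun y : ℝ => R*(y-a)) R (Icc a b) x := by
      simpa using (((hasDerivAt_id x).sub_const a).const_mul R).hasDerivWithinAt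
    exact (hρ.mul ((hEderiv x).hasDerivWithinAt)).sub hlin
  have hσanti : AntitoneOn σ (Icc a b) := by
    apply aux_anti hσderiv
    intro x hx
    have hE0 : 0 < E x := Real.exp_pos _
    have hE1 : E x ≤ 1 := by
      have : -(C*(x-a)) ≤ 0 := by nlinarith [hx.1]
      calc E x = Real.exp (-(C*(x-a))) := rfl
        _ ≤ Real.exp 0 := Real.exp_le_exp.2 this
        _ = 1 := Real.exp_zero
    have h1 : (2*(g x*g' x) + 2*(g' x*g'' x)) * E x ≤ (C*(ρ x) + R) * E x := by
      apply mul_le_mul_of_nonneg_right _ hE0.le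
      exact hbnd x hx
    have hρ0 : 0 ≤ ρ x := by
      have := mul_self_nonneg (g x)
      have := mul_self_nonneg (g' x)
      simp only [hρdef]
      linarith
    nlinarith [h1, hE0, hE1, hρ0, mul_nonneg (mul_nonneg hC hρ0) hE0.le]
  have hmem_a : a ∈ Icc a b := ⟨le_refl a, hab⟩
  have hmem_b : b ∈ Icc a b := ⟨hab, le_refl b⟩
  have hba := hσanti hmem_a hmem_b hab
  have hEa : E a = 1 := by simp [hEdef]
  have hσa : σ a = ρ a := by simp [hσdef, hEa]
  have hkey : ρ b * E b ≤ ρ a + R*(b-a) := by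
    have hσb : σ b = ρ b * E b - R*(b-a) := rfl
    rw [hσa, hσb] at hba
    linarith
  have hEinv : E b * Real.exp (C*(b-a)) = 1 := by
    have : E b = Real.exp (-(C*(b-a))) := rfl
    rw [this, ← Real.exp_add]
    ring_nf
    simp
  have hexp_pos : (0:ℝ) < Real.exp (C*(b-a)) := Real.exp_pos _
  calc ρ b = ρ b * (E b * Real.exp (C*(b-a))) := by rw [hEinv]; ring
    _ = (ρ b * E b) * Real.exp (C*(b-a)) := by ring
    _ ≤ (ρ a + R*(b-a)) * Real.exp (C*(b-a)) :=
        mul_le_mul_of_nonneg_right hkey hexp_pos.le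
/-- Maximum principle: if `du g'' = q g + r` with `q ≥ κ > 0`, `|r| ≤ R`, `g'(b)=0`,
then `g ≤ max (g a) (R/κ)` on `[a,b]`. -/
lemma aux_maxprin {g g' g'' q r : ℝ → ℝ} {a b du κ R : ℝ} (hdu : 0 < du)
    (hκ : 0 < κ) (hR : 0 ≤ R)
    (hd1 : ∀ x ∈ Icc a b, HasDerivWithinAt g (g' x) (Icc a b) x)
    (hd2 : ∀ x ∈ Icc a b, HasDerivWithinAt g' (g'' x) (Icc a b) x)
    (heq : ∀ x ∈ Icc a b, du * g'' x = q x * g x + r x)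
    (hq : ∀ x ∈ Icc a b, κ ≤ q x)
    (hr : ∀ x ∈ Icc a b, |r x| ≤ R)
    (hgb : g' b = 0) :
    ∀ x ∈ Icc a b, g x ≤ max (g a) (R/κ) := by
  intro x₀ hx₀
  by_contra hcon
  push_neg at hcon
  set B := max (g a) (R/κ) with hBdef
  have hBR : R/κ ≤ B := le_max_right _ _
  have hBa : g a ≤ B := le_max_left _ _
  have hB0 : 0 ≤ B := le_trans (div_nonneg hR hκ.le) hBR
  have hconv : ∀ x ∈ Icc a b, B < g x → 0 < g'' x := by
    intro x hx hgx
    have h1 : R/κ < g x := lt_of_le_of_lt hBR hgx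
    have h2 : R < g x * κ := (div_lt_iff₀ hκ).1 h1
    have h3 := hq x hx
    have h4 := abs_le.1 (hr x hx)
    have h5 := heq x hx
    have hgx0 : 0 < g x := lt_of_le_of_lt hB0 hgx
    nlinarith [mul_le_mul_of_nonneg_right h3 hgx0.le]
  have hcont := aux_contOn hd1
  have hax₀ : a ≤ x₀ := hx₀.1
  have hx₀b : x₀ ≤ b := hx₀.2
  -- the last point before x₀ where g ≤ B
  set S := Icc a x₀ ∩ g ⁻¹' (Iic B) with hSdef
  have hSclosed : IsClosed S :=
    ContinuousOn.preimage_isClosed_of_isClosed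
      (hcont.mono (Icc_subset_Icc_right hx₀b)) isClosed_Icc isClosed_Iic
  have hScomp : IsCompact S :=
    IsCompact.of_isClosed_subset isCompact_Icc hSclosed inter_subset_left
  have hSne : S.Nonempty := ⟨a, ⟨le_refl a, hax₀⟩, hBa⟩
  set c := sSup S with hcdef
  have hcS : c ∈ S := hScomp.sSup_mem hSne
  have hac : a ≤ c := hcS.1.1
  have hcx₀ : c ≤ x₀ := hcS.1.2
  have hgc : g c ≤ B := hcS.2
  have hcx₀' : c < x₀ := lt_of_le_of_ne hcx₀ (fun h => absurd (h ▸ hgc) (not_le.2 hcon))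
  have hgt1 : ∀ x, c < x → x ≤ x₀ → B < g x := by
    intro x h1 h2
    by_contra h3
    push_neg at h3
    have hxS : x ∈ S := ⟨⟨le_trans hac h1.le, h2⟩, h3⟩
    exact absurd (le_csSup hScomp.bddAbove hxS) (not_le.2 h1)
  set T := Icc x₀ b ∩ g ⁻¹' (Iic B) with hTdef
  by_cases hT : T.Nonempty
  · -- interior bump case: contradiction via MVT on both sides
    have hTclosed : IsClosed T :=
      ContinuousOn.preimage_isClosed_of_isClosed
        (hcont.mono (Icc_subset_Icc_left hax₀)) isClosed_Icc isClosed_Iic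
    have hTcomp : IsCompact T :=
      IsCompact.of_isClosed_subset isCompact_Icc hTclosed inter_subset_left
    set d := sInf T with hddef
    have hdT : d ∈ T := hTcomp.sInf_mem hT
    have hx₀d : x₀ ≤ d := hdT.1.1
    have hdb : d ≤ b := hdT.1.2
    have hgd : g d ≤ B := hdT.2
    have hx₀d' : x₀ < d := lt_of_le_of_ne hx₀d (fun h => absurd (h ▸ hcon) (not_lt.2 hgd))
    have hgt2 : ∀ x, x₀ ≤ x → x < d → B < g x := by
      intro x h1 h2
      by_contra h3
      push_neg at h3
      have hxT : x ∈ T := ⟨⟨h1, le_trans h2.le hdb⟩, h3⟩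
      exact absurd (csInf_le hTcomp.bddBelow hxT) (not_le.2 h2)
    have hsub : Icc c d ⊆ Icc a b := Icc_subset_Icc hac hdb
    have hmidpos : ∀ x ∈ Ioo c d, B < g x := by
      intro x hx
      rcases le_or_gt x x₀ with h | h
      · exact hgt1 x hx.1 h
      · exact hgt2 x h.le hx.2
    have hsub' : Ioo c d ⊆ Ioo a b := fun x hx =>
      ⟨lt_of_le_of_lt hac hx.1, lt_of_lt_of_le hx.2 hdb⟩
    have hsmono : StrictMonoOn g' (Icc c d) := by
      apply aux_smono (fun y hy => (hd2 y (hsub hy)).mono hsub)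
      intro x hx
      exact hconv x (hsub (Ioo_subset_Icc_self hx)) (hmidpos x hx)
    obtain ⟨p, hp, hpslope⟩ := exists_hasDerivAt_eq_slope g g' hcx₀'
      (hcont.mono (Icc_subset_Icc hac hx₀b))
      (fun x hx => aux_hasDerivAt hd1
        ⟨lt_of_le_of_lt hac hx.1, lt_of_lt_of_le hx.2 hx₀b⟩)
    obtain ⟨p', hp', hp'slope⟩ := exists_hasDerivAt_eq_slope g g' hx₀d'
      (hcont.mono (Icc_subset_Icc hax₀ hdb))
      (fun x hx => aux_hasDerivAt hd1
        ⟨lt_of_le_of_lt hax₀ hx.1, lt_of_lt_of_le hx.2 hdb⟩)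
    have hppos : 0 < g' p := by
      rw [hpslope]
      apply div_pos (by linarith) (by linarith [hp.1, hp.2])
    have hp'neg : g' p' < 0 := by
      rw [hp'slope]
      apply div_neg_of_neg_of_pos (by linarith) (by linarith [hp'.1, hp'.2])
    have hplt : p < p' := lt_trans hp.2 hp'.1
    have := hsmono ⟨hp.1.le, le_trans hp.2.le hx₀d⟩ ⟨le_trans hcx₀ hp'.1.le, hp'.2.le⟩ hplt
    linarith
  · -- g > B on all of [x₀, b]: then g' increasing on [c,b], g'(b)=0 forces g decreasing
    have hgt3 : ∀ x ∈ Icc x₀ b, B < g x := by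
      intro x hx
      by_contra h3
      push_neg at h3
      exact hT ⟨x, hx, h3⟩
    have hcb : c < b := lt_of_lt_of_le hcx₀' hx₀b
    have hsub : Icc c b ⊆ Icc a b := Icc_subset_Icc hac (le_refl b)
    have hmidpos : ∀ x ∈ Ioo c b, B < g x := by
      intro x hx
      rcases le_or_gt x x₀ with h | h
      · exact hgt1 x hx.1 h
      · exact hgt3 x ⟨h.le, hx.2.le⟩
    have hsmono : StrictMonoOn g' (Icc c b) := by
      apply aux_smono (fun y hy => (hd2 y (hsub hy)).mono hsub)
      intro x hx
      exact hconv x (hsub (Ioo_subset_Icc_self hx)) (hmidpos x hx)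
    have hanti : AntitoneOn g (Icc c b) := by
      apply aux_anti (fun y hy => (hd1 y (hsub hy)).mono hsub)
      intro x hx
      have := hsmono (Ioo_subset_Icc_self hx) ⟨hcb.le, le_refl b⟩ hx.2
      rw [hgb] at this
      exact this.le
    have := hanti ⟨le_refl c, hcb.le⟩ ⟨hcx₀'.le, hx₀b⟩ hcx₀'.le
    linarith

section Ffacts
variable {f : ℝ → ℝ}

lemma aux_F_intble (hfc : ContinuousOn f (Icc 0 1)) {a b : ℝ} (ha : a ∈ Icc (0:ℝ) 1) (hb : b ∈ Icc (0:ℝ) 1) :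
    IntervalIntegrable f MeasureTheory.volume a b := by
  apply ContinuousOn.intervalIntegrable
  apply hfc.mono
  rw [uIcc_eq_union]
  intro x hx
  rcases hx with hx | hx
  · exact ⟨le_trans ha.1 hx.1, le_trans hx.2 hb.2⟩
  · exact ⟨le_trans hb.1 hx.1, le_trans hx.2 ha.2⟩

lemma aux_F_deriv (hfc : ContinuousOn f (Icc 0 1)) {s : ℝ} (hs : s ∈ Ioo (0:ℝ) 1) :
    HasDerivAt (fun t => ∫ r in (0:ℝ)..t, f r) (f s) s := by
  apply intervalIntegral.integral_hasDerivAt_right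
    (aux_F_intble hfc ⟨le_refl 0, zero_le_one⟩ ⟨hs.1.le, hs.2.le⟩)
  · exact ⟨Icc 0 1, Icc_mem_nhds hs.1 hs.2, hfc.aestronglyMeasurable measurableSet_Icc⟩
  · exact hfc.continuousAt (Icc_mem_nhds hs.1 hs.2)

lemma aux_F_sub (hfc : ContinuousOn f (Icc 0 1)) {a b : ℝ} (ha : a ∈ Icc (0:ℝ) 1) (hb : b ∈ Icc (0:ℝ) 1) :
    (∫ r in (0:ℝ)..b, f r) - (∫ r in (0:ℝ)..a, f r) = ∫ r in a..b, f r := by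
  have h0 : (0:ℝ) ∈ Icc (0:ℝ) 1 := ⟨le_refl 0, zero_le_one⟩
  have := intervalIntegral.integral_add_adjacent_intervals
    (aux_F_intble hfc h0 ha) (aux_F_intble hfc ha hb)
  linarith

lemma aux_F_le (hfc : ContinuousOn f (Icc 0 1)) {a b : ℝ} (ha : a ∈ Icc (0:ℝ) 1) (hb : b ∈ Icc (0:ℝ) 1) (hab : a ≤ b)
    (hnn : ∀ s ∈ Icc a b, 0 ≤ f s) :
    (∫ r in (0:ℝ)..a, f r) ≤ ∫ r in (0:ℝ)..b, f r := by
  have h := aux_F_sub hfc ha hb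
  have h2 := intervalIntegral.integral_nonneg (μ := MeasureTheory.volume) hab hnn
  linarith

lemma aux_F_lt (hfc : ContinuousOn f (Icc 0 1)) {a b : ℝ} (ha : a ∈ Icc (0:ℝ) 1) (hb : b ∈ Icc (0:ℝ) 1) (hab : a < b)
    (hpos : ∀ s ∈ Ioo a b, 0 < f s) :
    (∫ r in (0:ℝ)..a, f r) < ∫ r in (0:ℝ)..b, f r := by
  have h := aux_F_sub hfc ha hb
  have h2 := intervalIntegral.intervalIntegral_pos_of_pos_on
    (aux_F_intble hfc ha hb) hpos hab
  linarith

lemma aux_F_bound (hfc : ContinuousOn f (Icc 0 1)) {M : ℝ} (hM : ∀ s ∈ Icc (0:ℝ) 1, |f s| ≤ M) {s : ℝ}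
    (hs : s ∈ Icc (0:ℝ) 1) : |∫ r in (0:ℝ)..s, f r| ≤ M := by
  have h := intervalIntegral.norm_integral_le_of_norm_le_const (C := M) (a := (0:ℝ)) (b := s)
    (f := f) ?_
  · rw [Real.norm_eq_abs] at h
    calc |∫ r in (0:ℝ)..s, f r| ≤ M * |s - 0| := h
      _ ≤ M * 1 := by
          apply mul_le_mul_of_nonneg_left _ (le_trans (abs_nonneg _) (hM 0 ⟨le_refl 0, zero_le_one⟩))
          rw [abs_of_nonneg (by linarith [hs.1] : (0:ℝ) ≤ s - 0)]
          linarith [hs.2]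
      _ = M := mul_one M
  · intro x hx
    rw [uIoc_of_le hs.1] at hx
    exact hM x ⟨hx.1.le, le_trans hx.2 hs.2⟩

end Ffacts

/-- Energy conservation for `-du w'' = f(w)`. -/
lemma aux_energy {du L : ℝ} {f w w' : ℝ → ℝ} (hdu : 0 < du)
    (hfc : ContinuousOn f (Icc 0 1))
    (hw : ∀ x ∈ Icc 0 L, HasDerivWithinAt w (w' x) (Icc 0 L) x)
    (hw' : ∀ x ∈ Icc 0 L, HasDerivWithinAt w' (-(f (w x)) / du) (Icc 0 L) x)
    (hrange : ∀ x ∈ Icc 0 L, w x ∈ Ioo (0:ℝ) 1) :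
    ∀ x ∈ Icc (0:ℝ) L, du/2*(w' x * w' x) + (∫ r in (0:ℝ)..(w x), f r)
      = du/2*(w' L * w' L) + ∫ r in (0:ℝ)..(w L), f r := by
  intro x hx
  have hLmem : L ∈ Icc (0:ℝ) L := ⟨le_trans hx.1 hx.2, le_refl L⟩
  have hsub : Icc x L ⊆ Icc 0 L := Icc_subset_Icc hx.1 (le_refl L)
  have hE : ∀ y ∈ Icc (0:ℝ) L, HasDerivWithinAt
      (fun z => du/2*(w' z*w' z) + (∫ r in (0:ℝ)..(w z), f r)) 0 (Icc 0 L) y := by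
    intro y hy
    have h1 := ((hw' y hy).mul (hw' y hy)).const_mul (du/2)
    have h2 := HasDerivAt.comp_hasDerivWithinAt y (aux_F_deriv hfc (hrange y hy)) (hw y hy)
    have h3 := h1.add h2
    refine h3.congr_deriv (Eq.symm ?_)
    field_simp
    ring
  have := aux_const (u' := fun _ => (0:ℝ)) hx.2
    (fun y hy => (hE y (hsub hy)).mono hsub) (fun _ _ => rfl)
  linarith [this]

/-- The conserved Wronskian-type quantity for the linearized problem. -/
lemma aux_wronskian {du L : ℝ} {f f' w w' W2f W2f' W2f'' : ℝ → ℝ} (hdu : 0 < du) (hL : 0 < L)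
    (hf' : ∀ s ∈ Icc (0:ℝ) 1, HasDerivAt f (f' s) s)
    (hw : ∀ x ∈ Icc 0 L, HasDerivWithinAt w (w' x) (Icc 0 L) x)
    (hw' : ∀ x ∈ Icc 0 L, HasDerivWithinAt w' (-(f (w x)) / du) (Icc 0 L) x)
    (hrange : ∀ x ∈ Icc 0 L, w x ∈ Ioo (0:ℝ) 1)
    (hd1 : ∀ x ∈ Icc 0 L, HasDerivWithinAt W2f (W2f' x) (Icc 0 L) x)
    (hd2 : ∀ x ∈ Icc 0 L, HasDerivWithinAt W2f' (W2f'' x) (Icc 0 L) x)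
    (heq : ∀ x ∈ Icc 0 L, du * W2f'' x + f' (w x) * W2f x = 2/L * f (w x)) :
    du * W2f' 0 * w' 0 + W2f 0 * f (w 0) + du/L*(w' 0 * w' 0)
      = du * W2f' L * w' L + W2f L * f (w L) + du/L*(w' L * w' L) := by
  have h0L : (0:ℝ) ≤ L := hL.le
  have hΦ : ∀ y ∈ Icc (0:ℝ) L, HasDerivWithinAt
      (fun z => du * (W2f' z * w' z) + W2f z * f (w z) + du/L*(w' z * w' z)) 0
      (Icc 0 L) y := by
    intro y hy
    have hfw : HasDerivWithinAt (fun z => f (w z)) (f' (w y) * w' y) (Icc 0 L) y :=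
      HasDerivAt.comp_hasDerivWithinAt y
        (hf' (w y) (Ioo_subset_Icc_self (hrange y hy))) (hw y hy)
    have h1 := ((hd2 y hy).mul (hw' y hy)).const_mul du
    have h2 := (hd1 y hy).mul hfw
    have h3 := ((hw' y hy).mul (hw' y hy)).const_mul (du/L)
    have h4 := (h1.add h2).add h3
    refine h4.congr_deriv (Eq.symm ?_)
    have h5 := heq y hy
    have hdu' : du ≠ 0 := ne_of_gt hdu
    have hL' : L ≠ 0 := ne_of_gt hL
    have e1 : du * (W2f'' y * w' y + W2f' y * (-f (w y) / du))
        = du * W2f'' y * w' y - W2f' y * f (w y) := by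
      field_simp
      ring
    have e2 : du / L * (-f (w y) / du * w' y + w' y * (-f (w y) / du))
        = -(2/L * f (w y) * w' y) := by
      field_simp
      ring
    rw [e1, e2]
    linear_combination (-(w' y)) * h5
  have := aux_const (u' := fun _ => (0:ℝ)) h0L (hΦ) (fun _ _ => rfl)
  linarith [this]

/-- Steepness estimate: if `f(w) ≥ m` on `[x,L]` and `w'(L) = 0` then
`w(L) - w(x) ≥ m (L-x)² / (2 du)`. -/
lemma aux_steep {du L m x : ℝ} {f w w' : ℝ → ℝ} (hdu : 0 < du)
    (hx : x ∈ Icc (0:ℝ) L)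
    (hw : ∀ y ∈ Icc 0 L, HasDerivWithinAt w (w' y) (Icc 0 L) y)
    (hw' : ∀ y ∈ Icc 0 L, HasDerivWithinAt w' (-(f (w y)) / du) (Icc 0 L) y)
    (hfm : ∀ y ∈ Icc x L, m ≤ f (w y))
    (hw'L : w' L = 0) :
    w x + m/(2*du)*((L-x)*(L-x)) ≤ w L := by
  have hsub : Icc x L ⊆ Icc (0:ℝ) L := Icc_subset_Icc hx.1 (le_refl L)
  have hxL : x ≤ L := hx.2
  have hq : ∀ y ∈ Icc x L, HasDerivWithinAt (fun z => w' z + m/du*(z - L))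
      (-(f (w y)) / du + m/du) (Icc x L) y := by
    intro y hy
    exact ((hw' y (hsub hy)).mono hsub).add
      ((((hasDerivAt_id y).sub_const L).const_mul (m/du)).hasDerivWithinAt.congr_deriv
        (by simp))
  have hanti : AntitoneOn (fun z => w' z + m/du*(z - L)) (Icc x L) := by
    apply aux_anti hq
    intro y hy
    have := hfm y (Ioo_subset_Icc_self hy)
    have : -(f (w y)) ≤ -m := by linarith
    rw [← add_div]
    apply div_nonpos_of_nonpos_of_nonneg _ hdu.le
    linarith
  have hqpos : ∀ y ∈ Icc x L, 0 ≤ w' y + m/du*(y - L) := by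
    intro y hy
    have := hanti hy ⟨hxL, le_refl L⟩ hy.2
    simpa [hw'L] using this
  have hr : ∀ y ∈ Icc x L, HasDerivWithinAt
      (fun z => w z + m/(2*du)*((z-L)*(z-L))) (w' y + m/du*(y - L)) (Icc x L) y := by
    intro y hy
    have hlin : HasDerivAt (fun z : ℝ => m/(2*du)*((z-L)*(z-L)))
        (m/(2*du)*((y-L) + (y-L))) y := by
      have h0 := (((hasDerivAt_id y).sub_const L).mul ((hasDerivAt_id y).sub_const L)).const_mul
        (m/(2*du))
      refine h0.congr_deriv ?_
      simp
    have h2 := ((hw y (hsub hy)).mono hsub).add hlin.hasDerivWithinAt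
    refine h2.congr_deriv (Eq.symm ?_)
    field_simp
    ring
  have hmono : MonotoneOn (fun z => w z + m/(2*du)*((z-L)*(z-L))) (Icc x L) :=
    aux_mono hr (fun y hy => hqpos y (Ioo_subset_Icc_self hy))
  have h9 := hmono ⟨le_refl x, hxL⟩ ⟨hxL, le_refl L⟩ hxL
  simp at h9
  have hsq : (x-L)*(x-L) = (L-x)*(L-x) := by ring
  rw [hsq] at h9
  exact h9

/-- Linear growth from a lower bound on the derivative. -/
lemma aux_growth {c X : ℝ} {w w' : ℝ → ℝ} (hX : 0 ≤ X)
    (hw : ∀ x ∈ Icc 0 X, HasDerivWithinAt w (w' x) (Icc 0 X) x)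
    (hc : ∀ x ∈ Ioo 0 X, c ≤ w' x) :
    w 0 + c*X ≤ w X := by
  have hu : ∀ x ∈ Icc (0:ℝ) X, HasDerivWithinAt (fun z => w z - c*z) (w' x - c) (Icc 0 X) x := by
    intro x hx
    exact (hw x hx).sub (((hasDerivAt_id x).const_mul c).hasDerivWithinAt.congr_deriv
      (by simp))
  have hmono : MonotoneOn (fun z => w z - c*z) (Icc 0 X) :=
    aux_mono hu (fun x hx => by linarith [hc x hx])
  have := hmono ⟨le_refl 0, hX⟩ ⟨hX, le_refl X⟩ hX
  simp at this
  linarith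

lemma aux_sqmono {a b : ℝ} (ha : 0 ≤ a) (h : a ≤ b) : a*a ≤ b*b :=
  mul_le_mul h h ha (le_trans ha h)

lemma aux_sqle {a b : ℝ} (ha : 0 ≤ a) (hb : 0 ≤ b) (h : a*a ≤ b*b) : a ≤ b := by
  by_contra hcon
  push_neg at hcon
  nlinarith

lemma aux_two_sq (a b : ℝ) : (a+b)*(a+b) ≤ 2*(a*a) + 2*(b*b) := by nlinarith [sq_nonneg (a-b)]

lemma aux_addsq {y u v : ℝ} (hy : 0 ≤ y) (h : y ≤ u + v) : y*y ≤ 2*(u*u) + 2*(v*v) := by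
  nlinarith [sq_nonneg (u-v), sq_nonneg (u+v)]

lemma aux_cancel {du a b : ℝ} (hdu : 0 < du) (h : du/2*a ≤ du/2*b) : a ≤ b := by
  have h2 : (0:ℝ) < 2/du := by positivity
  have h3 := mul_le_mul_of_nonneg_left h h2.le
  calc a = 2/du*(du/2*a) := by field_simp
    _ ≤ 2/du*(du/2*b) := h3
    _ = b := by field_simp

lemma aux_quadbound {du K M A B D Cg R₂ : ℝ} (hdu : 0 < du) (hK : 0 ≤ K) (hM : 0 ≤ M)
    (h : |D| ≤ (K*|A| + 2*M)/du) (hCg : Cg = K/du + 2) (hR : R₂ = 2*M/du) :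
    2*(A*B) + 2*(B*D) ≤ Cg*(A*A + B*B) + R₂*R₂ := by
  have h1 : A*B ≤ |A| * |B| := by
    calc A*B ≤ |A*B| := le_abs_self _
      _ = |A| * |B| := abs_mul _ _
  have h2 : B*D ≤ |B| * |D| := by
    calc B*D ≤ |B*D| := le_abs_self _
      _ = |B| * |D| := abs_mul _ _
  have h3 : |B| * |D| ≤ |B| * ((K*|A| + 2*M)/du) := mul_le_mul_of_nonneg_left h (abs_nonneg _)
  have hA := abs_nonneg A
  have hB := abs_nonneg B
  have hAA := abs_mul_abs_self A
  have hBB := abs_mul_abs_self B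
  rw [hCg, hR]
  have hKd : 0 ≤ K/du := by positivity
  have hMd : 0 ≤ 2*M/du := by positivity
  have h4 : |B| * ((K*|A| + 2*M)/du) = (K/du)*(|A| * |B|) + (2*M/du)*|B| := by
    field_simp
  nlinarith [sq_nonneg (|A| - |B|), sq_nonneg (|B| - 2*M/du), mul_nonneg hKd (sq_nonneg (|A| - |B|))]

set_option maxHeartbeats 2000000 in
/-- **Theorem 4.4 (thin-limit slope).**
For each `L > b₀` let `w₁ = W1 L` be the unique strictly increasing solution of
the limit problem, and `w₂ = W2 L` any C² solution of the linear problem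
`d_u w₂'' + f'(w₁) w₂ = (2/L) f(w₁)`, `w₂'(L) = 0`, `w₂(0) = (1/3) w₁'(0)`.
Then `d_u w₂'(0) → −(1/3) f(γ/α)` as `L → ∞`; equivalently the linear
coefficient of the thin-limit expansion of the total predator population
satisfies `(α/(βγ))(d_u w₂'(0) + f(γ/α)) → (2/3)(α/(βγ)) f(γ/α)`. -/
theorem thin_limit_slope
    (du dv α β γ : ℝ) (hdu : 0 < du) (hdv : 0 < dv) (hα : 0 < α) (hβ : 0 < β)
    (hγ : 0 < γ) (hγα : γ < α)
    (f f' : ℝ → ℝ) (θ θ' : ℝ) (hf : Bistable f θ)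
    (hf' : ∀ s ∈ Set.Icc (0:ℝ) 1, HasDerivAt f (f' s) s)
    (hf'c : ContinuousOn f' (Set.Icc 0 1)) (hf'1 : f' 1 < 0)
    (hθ'mem : θ' ∈ Set.Ioo θ 1) (hθ'F : (∫ r in (0:ℝ)..θ', f r) = 0)
    -- `η₀`, `b₀` as in the uniqueness proposition (Proposition 4.2):
    (η₀ b₀ : ℝ) (hη₀ : η₀ ∈ Set.Ioo (0:ℝ) (1 - θ')) (hb₀ : 0 < b₀)
    (W1 W1' W2 W2' W2'' : ℝ → ℝ → ℝ)
    -- `W1 L` is the unique strictly increasing solution of the limit problem: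
    (hW1 : ∀ L, b₀ < L →
      IsPL du (γ / α) f L (W1 L) (W1' L) ∧
      (∀ x ∈ Set.Icc (0:ℝ) L, 0 < W1 L x ∧ W1 L x < 1) ∧
      1 - η₀ < W1 L L ∧
      (∀ x ∈ Set.Ico (0:ℝ) L, 0 < W1' L x))
    (hW1uniq : ∀ L, b₀ < L → ∀ u u' : ℝ → ℝ, IsPL du (γ / α) f L u u' →
      (∀ x ∈ Set.Icc (0:ℝ) L, 0 < u x ∧ u x < 1) → 1 - η₀ < u L →
      Set.EqOn u (W1 L) (Set.Icc 0 L))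
    -- `W2 L` is a C² solution of the linear problem:
    (hW2 : ∀ L, b₀ < L →
      (∀ x ∈ Set.Icc (0:ℝ) L, HasDerivWithinAt (W2 L) (W2' L x) (Set.Icc 0 L) x) ∧
      (∀ x ∈ Set.Icc (0:ℝ) L, HasDerivWithinAt (W2' L) (W2'' L x) (Set.Icc 0 L) x) ∧
      ContinuousOn (W2'' L) (Set.Icc 0 L) ∧
      (∀ x ∈ Set.Icc (0:ℝ) L,
        du * W2'' L x + f' (W1 L x) * W2 L x = 2 / L * f (W1 L x)) ∧
      W2' L L = 0 ∧ W2 L 0 = W1' L 0 / 3) :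
    Filter.Tendsto (fun L => du * W2' L 0) Filter.atTop
      (nhds (-(1/3) * f (γ / α))) ∧
    Filter.Tendsto (fun L => α / (β * γ) * (du * W2' L 0 + f (γ / α)))
      Filter.atTop (nhds (2/3 * (α / (β * γ)) * f (γ / α))) := by

  have hp0 : 0 < γ / α := div_pos hγ hα
  have hp1 : γ / α < 1 := (div_lt_one hα).2 hγα
  have hθ0 : 0 < θ := hf.θ_mem.1
  have hθ1 : θ < 1 := hf.θ_mem.2
  have hθθ' : θ < θ' := hθ'mem.1
  have hθ'1 : θ' < 1 := hθ'mem.2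
  have hθ'0 : 0 < θ' := lt_trans hθ0 hθθ'
  have hη₀0 : 0 < η₀ := hη₀.1
  have hη₀θ' : θ' < 1 - η₀ := by linarith [hη₀.2]
  obtain ⟨M, hMn⟩ := isCompact_Icc.exists_bound_of_continuousOn hf.cont
  have hM : ∀ s ∈ Icc (0:ℝ) 1, |f s| ≤ M := fun s hs => by
    simpa [Real.norm_eq_abs] using hMn s hs
  have hM0 : 0 ≤ M := le_trans (abs_nonneg _) (hM 0 ⟨le_refl 0, zero_le_one⟩)
  obtain ⟨K, hKn⟩ := isCompact_Icc.exists_bound_of_continuousOn hf'c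
  have hK : ∀ s ∈ Icc (0:ℝ) 1, |f' s| ≤ K := fun s hs => by
    simpa [Real.norm_eq_abs] using hKn s hs
  have hK0 : 0 ≤ K := le_trans (abs_nonneg _) (hK 0 ⟨le_refl 0, zero_le_one⟩)
  set F : ℝ → ℝ := fun t => ∫ r in (0:ℝ)..t, f r with hFdef
  -- sign facts about f and F
  have hfnn : ∀ s, θ ≤ s → s ≤ 1 → 0 ≤ f s := by
    intro s h1 h2
    rcases eq_or_lt_of_le h1 with h | h
    · rw [← h, hf.fθ]
    · rcases eq_or_lt_of_le h2 with h' | h'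
      · rw [h', hf.f1]
      · exact (hf.pos s ⟨h, h'⟩).le
  have hfnp : ∀ s, 0 ≤ s → s ≤ θ → f s ≤ 0 := by
    intro s h1 h2
    rcases eq_or_lt_of_le h1 with h | h
    · rw [← h, hf.f0]
    · rcases eq_or_lt_of_le h2 with h' | h'
      · rw [h', hf.fθ]
      · exact (hf.neg s ⟨h, h'⟩).le
  have hFmono_le : ∀ a b, θ ≤ a → a ≤ b → b ≤ 1 → F a ≤ F b := by
    intro a b h1 h2 h3
    exact aux_F_le hf.cont ⟨le_trans hθ0.le h1, le_trans h2 h3⟩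
      ⟨le_trans hθ0.le (le_trans h1 h2), h3⟩ h2
      (fun s hs => hfnn s (le_trans h1 hs.1) (le_trans hs.2 h3))
  have hFmono_lt : ∀ a b, θ ≤ a → a < b → b ≤ 1 → F a < F b := by
    intro a b h1 h2 h3
    exact aux_F_lt hf.cont ⟨le_trans hθ0.le h1, le_trans h2.le h3⟩
      ⟨le_trans hθ0.le (le_trans h1 h2.le), h3⟩ h2
      (fun s hs => hf.pos s ⟨lt_of_le_of_lt h1 hs.1, lt_of_lt_of_le hs.2 h3⟩)
  have hFθ' : F θ' = 0 := hθ'F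
  have hFpos : ∀ s, θ' ≤ s → s ≤ 1 → 0 ≤ F s := by
    intro s h1 h2
    have := hFmono_le θ' s hθθ'.le h1 h2
    linarith [hFθ']
  have hFposs : ∀ s, θ' < s → s ≤ 1 → 0 < F s := by
    intro s h1 h2
    have := hFmono_lt θ' s hθθ'.le h1 h2
    linarith [hFθ']
  have hFnonpos : ∀ s, 0 ≤ s → s ≤ θ' → F s ≤ 0 := by
    intro s h1 h2
    rcases le_or_gt s θ with h | h
    · have h0 : 0 ≤ ∫ r in (0:ℝ)..s, -(f r) :=
        intervalIntegral.integral_nonneg (μ := MeasureTheory.volume) h1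
          (fun u hu => neg_nonneg.2 (hfnp u hu.1 (le_trans hu.2 h)))
      rw [intervalIntegral.integral_neg] at h0
      simp only [hFdef]
      linarith
    · rcases eq_or_lt_of_le h2 with h' | h'
      · rw [h']; exact le_of_eq hFθ'
      · have := hFmono_lt s θ' h.le h' hθ'1.le
        linarith [hFθ']
  have hFle : ∀ s t, 0 ≤ s → s ≤ t → θ' ≤ t → t ≤ 1 → F s ≤ F t := by
    intro s t h1 h2 h3 h4
    rcases le_or_gt s θ' with h | h
    · exact le_trans (hFnonpos s h1 h) (hFpos t h3 h4)
    · exact hFmono_le s t (le_trans hθθ'.le h.le) h2 h4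
  have hFbd : ∀ s, 0 ≤ s → s ≤ 1 → |F s| ≤ M := fun s h1 h2 =>
    aux_F_bound hf.cont hM ⟨h1, h2⟩
  -- the constant κ and the level s₁ below 1 where f' ≤ -κ
  set κ := -(f' 1)/2 with hκdef
  have hκpos : 0 < κ := by rw [hκdef]; linarith
  have hcw : ContinuousWithinAt f' (Icc (0:ℝ) 1) 1 := hf'c 1 ⟨zero_le_one, le_refl 1⟩
  have hmem : f' ⁻¹' (Iio (-κ)) ∈ nhdsWithin 1 (Icc (0:ℝ) 1) :=
    hcw (Iio_mem_nhds (by rw [hκdef]; linarith))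
  rw [Metric.mem_nhdsWithin_iff] at hmem
  obtain ⟨ε, hε0, hεsub⟩ := hmem
  have hρmin : 0 < min (ε/2) (min ((1-θ')/2) ((1 - γ/α)/2)) := by
    apply lt_min (by linarith)
    apply lt_min (by linarith) (by linarith)
  set ρh := min (ε/2) (min ((1-θ')/2) ((1 - γ/α)/2)) with hρhdef
  set s₁ := 1 - ρh with hs₁def
  have hρθ' : ρh ≤ (1-θ')/2 := le_trans (min_le_right _ _) (min_le_left _ _)
  have hργ : ρh ≤ (1 - γ/α)/2 := le_trans (min_le_right _ _) (min_le_right _ _)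
  have hρε : ρh ≤ ε/2 := min_le_left _ _
  have hs₁θ' : θ' < s₁ := by rw [hs₁def]; linarith
  have hs₁γ : γ/α < s₁ := by rw [hs₁def]; linarith
  have hs₁1 : s₁ < 1 := by rw [hs₁def]; linarith [hρmin]
  have hs₁0 : 0 < s₁ := lt_trans hθ'0 hs₁θ'
  have hs₁θ : θ < s₁ := lt_trans hθθ' hs₁θ'
  have hf's₁ : ∀ s, s₁ ≤ s → s ≤ 1 → f' s ≤ -κ := by
    intro s h1 h2
    have hball : s ∈ Metric.ball (1:ℝ) ε := by
      rw [Metric.mem_ball, Real.dist_eq, abs_of_nonpos (by linarith)]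
      rw [hs₁def] at h1
      linarith
    have hs01 : s ∈ Icc (0:ℝ) 1 := ⟨by linarith [hs₁0], h2⟩
    exact (hεsub ⟨hball, hs01⟩).le
  -- Claim 1: the value at the right end tends to 1
  have hwLlim : ∀ s', s' < 1 → ∃ L₀, ∀ L, L₀ ≤ L → b₀ < L → s' < W1 L L := by
    intro s' hs'1
    rcases le_or_gt s' (1-η₀) with hcase | hcase
    · exact ⟨0, fun L _ hLb => lt_of_le_of_lt hcase (hW1 L hLb).2.2.1⟩
    · set s₀ := (θ' + (1-η₀))/2 with hs₀def
      have hs₀θ' : θ' < s₀ := by rw [hs₀def]; linarith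
      have hs₀η : s₀ < 1 - η₀ := by rw [hs₀def]; linarith
      have hs₀θ : θ < s₀ := lt_trans hθθ' hs₀θ'
      have hs₀s' : s₀ < s' := lt_trans hs₀η hcase
      obtain ⟨z, hz, hzmin⟩ := isCompact_Icc.exists_isMinOn (nonempty_Icc.2 hs₀s'.le)
        (hf.cont.mono (Icc_subset_Icc (by linarith [hθ'0]) hs'1.le))
      have hm0 : 0 < f z := hf.pos z ⟨lt_of_lt_of_le hs₀θ hz.1, lt_of_le_of_lt hz.2 hs'1⟩
      set m := f z with hmdef
      obtain ⟨ℓ, hℓ0, hℓsq⟩ : ∃ c, 0 ≤ c ∧ c*c = 2*du/m :=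
        ⟨Real.sqrt _, Real.sqrt_nonneg _, Real.mul_self_sqrt (by positivity)⟩
      have hgap : 0 < F (1-η₀) - F s₀ := by
        have := hFmono_lt s₀ (1-η₀) hs₀θ.le hs₀η (by linarith)
        linarith
      obtain ⟨c₇, hc₇0, hc₇sq⟩ : ∃ c, 0 < c ∧ c*c = 2*(F (1-η₀) - F s₀)/du :=
        ⟨Real.sqrt _, Real.sqrt_pos.2 (by positivity), Real.mul_self_sqrt (by positivity)⟩
      have h1c₇ : 0 < 1/c₇ := by positivity
      refine ⟨ℓ + 1 + 1/c₇ + 1, fun L hLge hLb => ?_⟩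
      by_contra hcon
      push_neg at hcon
      obtain ⟨⟨hw, hw'', hw0, hw'L⟩, hrange, hwLη, hw'pos⟩ := hW1 L hLb
      have hL0 : 0 < L := lt_trans hb₀ hLb
      have hw'nn : ∀ x ∈ Icc (0:ℝ) L, 0 ≤ W1' L x := by
        intro x hx
        rcases lt_or_eq_of_le hx.2 with h | h
        · exact (hw'pos x ⟨hx.1, h⟩).le
        · rw [h, hw'L]
      have hwmono : MonotoneOn (W1 L) (Icc 0 L) :=
        aux_mono hw (fun x hx => hw'nn x (Ioo_subset_Icc_self hx))
      have hrange' : ∀ x ∈ Icc (0:ℝ) L, W1 L x ∈ Ioo (0:ℝ) 1 :=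
        fun x hx => ⟨(hrange x hx).1, (hrange x hx).2⟩
      have hen := aux_energy hdu hf.cont hw hw'' hrange'
      have hLmem : L ∈ Icc (0:ℝ) L := ⟨hL0.le, le_refl L⟩
      have hsteep : ∀ x ∈ Icc (0:ℝ) L, s₀ ≤ W1 L x → (L-x)*(L-x) ≤ 2*du/m := by
        intro x hx hge
        have hfm : ∀ y ∈ Icc x L, m ≤ f (W1 L y) := by
          intro y hy
          have hyL : y ∈ Icc (0:ℝ) L := ⟨le_trans hx.1 hy.1, hy.2⟩
          have h1 : W1 L x ≤ W1 L y := hwmono hx hyL hy.1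
          have h2 : W1 L y ≤ W1 L L := hwmono hyL hLmem hy.2
          exact isMinOn_iff.1 hzmin _ ⟨le_trans hge h1, le_trans h2 hcon⟩
        have hst := aux_steep hdu hx hw hw'' hfm hw'L
        have h1 := (hrange x hx).1
        have h2 := (hrange L hLmem).2
        have h3 : m/(2*du)*((L-x)*(L-x)) ≤ 1 := by linarith
        have h4 : (0:ℝ) ≤ 2*du/m := by positivity
        calc (L-x)*(L-x) = (2*du/m)*(m/(2*du)*((L-x)*(L-x))) := by
              field_simp
          _ ≤ (2*du/m)*1 := mul_le_mul_of_nonneg_left h3 h4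
          _ = 2*du/m := mul_one _
      set x₂ := L - ℓ - 1 with hx₂def
      have hx₂0 : 0 ≤ x₂ := by rw [hx₂def]; linarith
      have hx₂L : x₂ ≤ L := by rw [hx₂def]; linarith
      have hsmall : ∀ x ∈ Icc (0:ℝ) x₂, W1 L x < s₀ := by
        intro x hx
        by_contra hge
        push_neg at hge
        have hxL : x ∈ Icc (0:ℝ) L := ⟨hx.1, le_trans hx.2 hx₂L⟩
        have h5 := hsteep x hxL hge
        have h6 : (ℓ+1)*(ℓ+1) ≤ (L-x)*(L-x) :=
          aux_sqmono (by linarith) (by linarith [hx.2])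
        have hexp : (ℓ+1)*(ℓ+1) = ℓ*ℓ + 2*ℓ + 1 := by ring
        linarith
      have hw'c₇ : ∀ x ∈ Ioo (0:ℝ) x₂, c₇ ≤ W1' L x := by
        intro x hx
        have hxL : x ∈ Icc (0:ℝ) L := ⟨hx.1.le, le_trans hx.2.le hx₂L⟩
        have h1 := hen x hxL
        rw [hw'L] at h1
        have hFwx : F (W1 L x) ≤ F s₀ := hFle _ _ (hrange x hxL).1.le
          (hsmall x ⟨hx.1.le, hx.2.le⟩).le hs₀θ'.le (by linarith)
        have hFwL : F (1-η₀) ≤ F (W1 L L) := hFle _ _ (by linarith)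
          hwLη.le (by linarith) (hrange L hLmem).2.le
        have h2 := hw'pos x ⟨hx.1.le, lt_of_lt_of_le hx.2 hx₂L⟩
        have hgapeq : du/2*(c₇*c₇) = F (1-η₀) - F s₀ := by rw [hc₇sq]; field_simp
        have hge : du/2*(c₇*c₇) ≤ du/2*(W1' L x * W1' L x) := by linarith
        have hsq : c₇*c₇ ≤ W1' L x * W1' L x := by
          have hpos : (0:ℝ) < 2/du := by positivity
          have h3 := mul_le_mul_of_nonneg_left hge hpos.le
          calc c₇*c₇ = 2/du*(du/2*(c₇*c₇)) := by field_simp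
            _ ≤ 2/du*(du/2*(W1' L x * W1' L x)) := h3
            _ = W1' L x*W1' L x := by field_simp
        exact aux_sqle hc₇0.le h2.le hsq
      have hgrow := aux_growth hx₂0
        (fun x hx => (hw x ⟨hx.1, le_trans hx.2 hx₂L⟩).mono
          (Icc_subset_Icc (le_refl 0) hx₂L)) hw'c₇
      rw [hw0] at hgrow
      have hc₇ne : c₇ ≠ 0 := ne_of_gt hc₇0
      have hx₂big : 1/c₇ + 1 ≤ x₂ := by rw [hx₂def]; linarith
      have hmul : c₇ * (1/c₇ + 1) ≤ c₇ * x₂ := mul_le_mul_of_nonneg_left hx₂big hc₇0.le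
      have hone : c₇ * (1/c₇ + 1) = 1 + c₇ := by field_simp
      have hlt1 := (hrange x₂ ⟨hx₂0, hx₂L⟩).2
      linarith
  -- Claim 2: beyond a fixed X₁ the front is above s₁, for all large L
  have hentry : ∃ X₁ L₁, 0 < X₁ ∧ b₀ + 1 ≤ L₁ ∧ X₁ + 1 ≤ L₁ ∧ 1 ≤ L₁ ∧
      ∀ L, L₁ ≤ L → ∀ x, X₁ ≤ x → x ≤ L → s₁ ≤ W1 L x := by
    set s' := (1 + s₁)/2 with hs'def
    have hs's₁ : s₁ < s' := by rw [hs'def]; linarith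
    have hs'1 : s' < 1 := by rw [hs'def]; linarith
    obtain ⟨L₀, hL₀⟩ := hwLlim s' hs'1
    have hgap : 0 < F s' - F s₁ := by
      have := hFmono_lt s₁ s' hs₁θ.le hs's₁ hs'1.le
      linarith
    obtain ⟨c₈, hc₈0, hc₈sq⟩ : ∃ c, 0 < c ∧ c*c = 2*(F s' - F s₁)/du :=
      ⟨Real.sqrt _, Real.sqrt_pos.2 (by positivity), Real.mul_self_sqrt (by positivity)⟩
    have h1c₈ : 0 < 1/c₈ := by positivity
    refine ⟨1/c₈ + 1, max (max L₀ (b₀+1)) (1/c₈ + 2), by positivity, ?_, ?_, ?_, ?_⟩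
    · exact le_trans (le_max_right L₀ (b₀+1)) (le_max_left _ _)
    · have he : (1/c₈+1)+1 = 1/c₈+2 := by ring
      rw [he]
      exact le_max_right _ _
    · exact le_trans (show (1:ℝ) ≤ b₀+1 by linarith)
        (le_trans (le_max_right L₀ (b₀+1)) (le_max_left _ _))
    · intro L hL x hx hxL
      have hLb : b₀ < L := by
        have := le_trans (le_trans (le_max_right L₀ (b₀+1)) (le_max_left _ _)) hL
        linarith
      have hLL₀ : L₀ ≤ L := le_trans (le_trans (le_max_left _ _) (le_max_left _ _)) hL
      have hX₁L : 1/c₈ + 2 ≤ L := le_trans (le_max_right _ _) hL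
      have hs'wL := hL₀ L hLL₀ hLb
      obtain ⟨⟨hw, hw'', hw0, hw'L⟩, hrange, hwLη, hw'pos⟩ := hW1 L hLb
      have hL0 : 0 < L := lt_trans hb₀ hLb
      have hw'nn : ∀ y ∈ Icc (0:ℝ) L, 0 ≤ W1' L y := by
        intro y hy
        rcases lt_or_eq_of_le hy.2 with h | h
        · exact (hw'pos y ⟨hy.1, h⟩).le
        · rw [h, hw'L]
      have hwmono : MonotoneOn (W1 L) (Icc 0 L) :=
        aux_mono hw (fun y hy => hw'nn y (Ioo_subset_Icc_self hy))
      have hrange' : ∀ y ∈ Icc (0:ℝ) L, W1 L y ∈ Ioo (0:ℝ) 1 :=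
        fun y hy => ⟨(hrange y hy).1, (hrange y hy).2⟩
      have hen := aux_energy hdu hf.cont hw hw'' hrange'
      have hLmem : L ∈ Icc (0:ℝ) L := ⟨hL0.le, le_refl L⟩
      have hX₁mem : 1/c₈ + 1 ∈ Icc (0:ℝ) L := ⟨by positivity, by linarith⟩
      have hxmem : x ∈ Icc (0:ℝ) L := ⟨by linarith [hx, h1c₈], hxL⟩
      suffices hX : s₁ ≤ W1 L (1/c₈ + 1) by
        exact le_trans hX (hwmono hX₁mem hxmem hx)
      by_contra hcon
      push_neg at hcon
      have hw'c₈ : ∀ y ∈ Ioo (0:ℝ) (1/c₈+1), c₈ ≤ W1' L y := by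
        intro y hy
        have hyL : y ∈ Icc (0:ℝ) L := ⟨hy.1.le, by linarith [hy.2]⟩
        have h1 := hen y hyL
        rw [hw'L] at h1
        have hwy : W1 L y ≤ W1 L (1/c₈+1) := hwmono hyL hX₁mem hy.2.le
        have hFwy : F (W1 L y) ≤ F s₁ := hFle _ _ (hrange y hyL).1.le
          (by linarith) hs₁θ'.le hs₁1.le
        have hFwL : F s' ≤ F (W1 L L) := hFle _ _ (by linarith)
          hs'wL.le (by linarith) (hrange L hLmem).2.le
        have h2 := hw'pos y ⟨hy.1.le, by linarith [hy.2]⟩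
        have hgapeq : du/2*(c₈*c₈) = F s' - F s₁ := by rw [hc₈sq]; field_simp
        have hge : du/2*(c₈*c₈) ≤ du/2*(W1' L y * W1' L y) := by linarith
        have hsq : c₈*c₈ ≤ W1' L y * W1' L y := by
          have hpos : (0:ℝ) < 2/du := by positivity
          have h3 := mul_le_mul_of_nonneg_left hge hpos.le
          calc c₈*c₈ = 2/du*(du/2*(c₈*c₈)) := by field_simp
            _ ≤ 2/du*(du/2*(W1' L y * W1' L y)) := h3
            _ = W1' L y*W1' L y := by field_simp
        exact aux_sqle hc₈0.le h2.le hsq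
      have hgrow := aux_growth (by positivity : (0:ℝ) ≤ 1/c₈+1)
        (fun y hy => (hw y ⟨hy.1, by linarith [hy.2]⟩).mono
          (Icc_subset_Icc (le_refl 0) (by linarith))) hw'c₈
      rw [hw0] at hgrow
      have hc₈ne : c₈ ≠ 0 := ne_of_gt hc₈0
      have hone : c₈ * (1/c₈ + 1) = 1 + c₈ := by field_simp
      linarith
  obtain ⟨X₁, L₁, hX₁0, hL₁b, hX₁L₁, hL₁1, hentry'⟩ := hentry
  -- limits of the endpoint values
  have hwL1 : Tendsto (fun L => W1 L L) atTop (nhds 1) := by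
    refine tendsto_order.2 ⟨?_, ?_⟩
    · intro a ha
      obtain ⟨L₀, hL₀⟩ := hwLlim a ha
      rw [eventually_atTop]
      refine ⟨max L₀ (b₀+1), fun L hL => ?_⟩
      have h1 := le_trans (le_max_left _ _) hL
      have h2 := le_trans (le_max_right L₀ (b₀+1)) hL
      exact hL₀ L h1 (by linarith)
    · intro a ha
      rw [eventually_atTop]
      refine ⟨b₀+1, fun L hL => ?_⟩
      have h := ((hW1 L (by linarith)).2.1 L ⟨by linarith, le_refl L⟩).2
      linarith
  have hεlim : Tendsto (fun L => f (W1 L L)) atTop (nhds 0) := by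
    have h1 : Tendsto (fun L => W1 L L) atTop (nhdsWithin 1 (Icc (0:ℝ) 1)) := by
      apply tendsto_nhdsWithin_of_tendsto_nhds_of_eventually_within _ hwL1
      rw [eventually_atTop]
      refine ⟨b₀+1, fun L hL => ?_⟩
      have h := (hW1 L (by linarith)).2.1 L ⟨by linarith, le_refl L⟩
      exact ⟨h.1.le, h.2.le⟩
    have h2 := (hf.cont 1 ⟨zero_le_one, le_refl 1⟩).tendsto.comp h1
    rw [hf.f1] at h2
    exact h2
  -- uniform bounds on the slope at 0
  have hgap₀ : 0 < F s₁ - F (γ/α) := by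
    rcases le_or_gt (γ/α) θ' with h | h
    · have h1 := hFnonpos (γ/α) hp0.le h
      have h2 := hFposs s₁ hs₁θ' hs₁1.le
      linarith
    · have := hFmono_lt (γ/α) s₁ (by linarith) hs₁γ hs₁1.le
      linarith
  obtain ⟨c₀, hc₀0, hc₀sq⟩ : ∃ c, 0 < c ∧ c*c = 2*(F s₁ - F (γ/α))/du :=
    ⟨Real.sqrt _, Real.sqrt_pos.2 (by positivity), Real.mul_self_sqrt (by positivity)⟩
  obtain ⟨C₁, hC₁0, hC₁sq⟩ : ∃ c, 0 ≤ c ∧ c*c = 4*M/du :=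
    ⟨Real.sqrt _, Real.sqrt_nonneg _, Real.mul_self_sqrt (by positivity)⟩
  -- global constants for the W2-bound
  set R₂ := 2*M/du with hR₂def
  set Cg := K/du + 2 with hCgdef
  have hCg0 : 0 ≤ Cg := by rw [hCgdef]; positivity
  set Egr := Real.exp (Cg * X₁) with hEgrdef
  have hEgr0 : 0 < Egr := Real.exp_pos _
  have hdc : 0 < du * c₀ := by positivity
  set a₂ := 1/(du*c₀) with ha₂def
  have ha₂0 : 0 < a₂ := by rw [ha₂def]; positivity
  set a₁ := ((C₁/3)*M + du*(C₁*C₁))*a₂ with ha₁def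
  have ha₁0 : 0 ≤ a₁ := by
    rw [ha₁def]
    have h1 : 0 ≤ (C₁/3)*M := mul_nonneg (by linarith only [hC₁0]) hM0
    have h2 : 0 ≤ du*(C₁*C₁) := mul_nonneg hdu.le (mul_self_nonneg _)
    exact mul_nonneg (by linarith only [h1, h2]) ha₂0.le
  set v := 2*M/κ with hvdef
  have hv0 : 0 ≤ v := by rw [hvdef]; positivity
  set Ysq := 2*(2*((C₁/3)*(C₁/3) + 2*(a₁*a₁) + (R₂*R₂)*X₁)*Egr + 2*(v*v)) + 1 with hYsqdef
  have hYsq0 : 0 < Ysq := by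
    rw [hYsqdef]
    have h1 : 0 ≤ (C₁/3)*(C₁/3) := mul_self_nonneg _
    have h2 : 0 ≤ a₁*a₁ := mul_self_nonneg _
    have h3 : 0 ≤ (R₂*R₂)*X₁ := mul_nonneg (mul_self_nonneg _) hX₁0.le
    have h4 : 0 ≤ v*v := mul_self_nonneg _
    have h5 : 0 ≤ ((C₁/3)*(C₁/3) + 2*(a₁*a₁) + (R₂*R₂)*X₁)*Egr :=
      mul_nonneg (by linarith only [h1, h2, h3]) hEgr0.le
    linarith only [h4, h5]
  obtain ⟨Y, hY0, hYsq⟩ : ∃ y, 0 ≤ y ∧ y*y = Ysq :=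
    ⟨Real.sqrt _, Real.sqrt_nonneg _, Real.mul_self_sqrt hYsq0.le⟩
  obtain ⟨sE, hsE0, hsEsq⟩ : ∃ c, 0 ≤ c ∧ c*c = Egr :=
    ⟨Real.sqrt _, Real.sqrt_nonneg _, Real.mul_self_sqrt hEgr0.le⟩
  set ε₀ := 1/(3*(a₂+1)*(sE+1)) with hε₀def
  have hε₀0 : 0 < ε₀ := by rw [hε₀def]; positivity
  have hεkey : ∀ e, 0 ≤ e → e ≤ ε₀ → 4*((a₂*e)*(a₂*e))*Egr ≤ 1/2 := by
    intro e he0 he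
    have hD0 : (0:ℝ) < 3*(a₂+1)*(sE+1) := by positivity
    have hεD : ε₀ * (3*(a₂+1)*(sE+1)) = 1 := by rw [hε₀def]; field_simp
    have hA : a₂*a₂ ≤ (a₂+1)*(a₂+1) := aux_sqmono ha₂0.le (by linarith only [])
    have hB : Egr ≤ (sE+1)*(sE+1) := by
      rw [← hsEsq]; exact aux_sqmono hsE0 (by linarith only [])
    have hC : (a₂*a₂)*Egr ≤ ((a₂+1)*(a₂+1))*((sE+1)*(sE+1)) :=
      mul_le_mul hA hB hEgr0.le (mul_nonneg (by positivity) (by positivity))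
    have hP : (0:ℝ) ≤ ((a₂+1)*(a₂+1))*((sE+1)*(sE+1)) :=
      mul_nonneg (by positivity) (by positivity)
    have hkey : 8*((a₂*a₂)*Egr) ≤ (3*(a₂+1)*(sE+1))*(3*(a₂+1)*(sE+1)) := by
      have hD : (3*(a₂+1)*(sE+1))*(3*(a₂+1)*(sE+1))
          = 9*(((a₂+1)*(a₂+1))*((sE+1)*(sE+1))) := by ring
      rw [hD]
      linarith only [hC, hP]
    have he2 : e*e ≤ ε₀*ε₀ := aux_sqmono he0 he
    have h1 : 8*((a₂*a₂)*Egr)*(ε₀*ε₀) ≤ ((3*(a₂+1)*(sE+1))*(3*(a₂+1)*(sE+1)))*(ε₀*ε₀) :=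
      mul_le_mul_of_nonneg_right hkey (mul_self_nonneg ε₀)
    have h2 : ((3*(a₂+1)*(sE+1))*(3*(a₂+1)*(sE+1)))*(ε₀*ε₀) = 1 := by
      calc ((3*(a₂+1)*(sE+1))*(3*(a₂+1)*(sE+1)))*(ε₀*ε₀)
          = (ε₀*(3*(a₂+1)*(sE+1)))*(ε₀*(3*(a₂+1)*(sE+1))) := by ring
        _ = 1 := by rw [hεD]; norm_num
    have h3 : 4*((a₂*a₂)*Egr)*(e*e) ≤ 4*((a₂*a₂)*Egr)*(ε₀*ε₀) :=
      mul_le_mul_of_nonneg_left he2 (by positivity)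
    have h4 : 4*((a₂*e)*(a₂*e))*Egr = 4*((a₂*a₂)*Egr)*(e*e) := by ring
    rw [h4]
    linarith only [h1, h2, h3]
  -- the main per-L estimate
  have hmain : ∀ L, L₁ ≤ L → f (W1 L L) ≤ ε₀ →
      |du * W2' L 0 + 1/3 * f (γ/α)| ≤ (Y * f (W1 L L) + du*(C₁*C₁)/L)/c₀ := by
    intro L hLL₁ hεs
    have hLb : b₀ < L := by linarith
    have hL0 : 0 < L := lt_trans hb₀ hLb
    have hL1 : (1:ℝ) ≤ L := le_trans hL₁1 hLL₁
    have hX₁L : X₁ + 1 ≤ L := le_trans hX₁L₁ hLL₁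
    obtain ⟨⟨hw, hw'', hw0, hw'L⟩, hrange, hwLη, hw'pos⟩ := hW1 L hLb
    obtain ⟨hd1, hd2, hd2c, heq, hW2'L, hW20⟩ := hW2 L hLb
    have hLmem : L ∈ Icc (0:ℝ) L := ⟨hL0.le, le_refl L⟩
    have h0mem : (0:ℝ) ∈ Icc (0:ℝ) L := ⟨le_refl 0, hL0.le⟩
    have hw'nn : ∀ y ∈ Icc (0:ℝ) L, 0 ≤ W1' L y := by
      intro y hy
      rcases lt_or_eq_of_le hy.2 with h | h
      · exact (hw'pos y ⟨hy.1, h⟩).le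
      · rw [h, hw'L]
    have hrange' : ∀ y ∈ Icc (0:ℝ) L, W1 L y ∈ Ioo (0:ℝ) 1 :=
      fun y hy => ⟨(hrange y hy).1, (hrange y hy).2⟩
    have hrange01 : ∀ y ∈ Icc (0:ℝ) L, W1 L y ∈ Icc (0:ℝ) 1 :=
      fun y hy => ⟨(hrange y hy).1.le, (hrange y hy).2.le⟩
    have hen := aux_energy hdu hf.cont hw hw'' hrange'
    set ε := f (W1 L L) with hεdef
    have hε0' : 0 ≤ ε := by
      rw [hεdef]
      exact hfnn _ (by linarith only [hwLη, hη₀θ', hθθ']) (hrange L hLmem).2.le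
    -- slope bounds at 0
    have hw'le : ∀ y ∈ Icc (0:ℝ) L, W1' L y ≤ C₁ := by
      intro y hy
      have h1 := hen y hy
      rw [hw'L] at h1
      have h2 := hFbd _ (hrange y hy).1.le (hrange y hy).2.le
      have h3 := hFbd _ (hrange L hLmem).1.le (hrange L hLmem).2.le
      rw [abs_le] at h2 h3
      have heqC : du/2*(C₁*C₁) = 2*M := by rw [hC₁sq]; field_simp; ring
      have hge : du/2*(W1' L y*W1' L y) ≤ du/2*(C₁*C₁) := by
        rw [heqC]; linarith only [h1, h2.1, h3.2]
      exact aux_sqle (hw'nn y hy) hC₁0 (aux_cancel hdu hge)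
    have hw'0pos : 0 < W1' L 0 := hw'pos 0 ⟨le_refl 0, hL0⟩
    have hwLs₁ : s₁ ≤ W1 L L := hentry' L hLL₁ L (by linarith) (le_refl L)
    have hw'0c₀ : c₀ ≤ W1' L 0 := by
      have h1 := hen 0 h0mem
      rw [hw'L, hw0] at h1
      have hFwL : F s₁ ≤ F (W1 L L) := hFle _ _ (by linarith only [hs₁0]) hwLs₁
        (by linarith only [hs₁θ', hwLs₁]) (hrange L hLmem).2.le
      have hgapeq : du/2*(c₀*c₀) = F s₁ - F (γ/α) := by rw [hc₀sq]; field_simp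
      have hge : du/2*(c₀*c₀) ≤ du/2*(W1' L 0*W1' L 0) := by
        rw [hgapeq]; linarith only [h1, hFwL]
      exact aux_sqle hc₀0.le hw'0pos.le (aux_cancel hdu hge)
    -- the Wronskian identity
    have hid0 := aux_wronskian hdu hL0 hf' hw hw'' hrange' hd1 hd2 heq
    rw [hw'L, hW2'L, hw0, hW20] at hid0
    have hid : du * W2' L 0 * W1' L 0 + (W1' L 0/3) * f (γ/α)
        + du/L*(W1' L 0 * W1' L 0) = W2 L L * ε := by
      rw [hεdef]
      linarith only [hid0]
    -- bound on W2''
    have habs'' : ∀ y ∈ Icc (0:ℝ) L, |W2'' L y| ≤ (K*|W2 L y| + 2*M)/du := by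
      intro y hy
      have h1 := heq y hy
      have hy01 := hrange01 y hy
      have h2 : du * W2'' L y = 2/L * f (W1 L y) - f' (W1 L y) * W2 L y := by
        linarith only [h1]
      have h3 : |du * W2'' L y| ≤ 2/L*M + K*|W2 L y| := by
        rw [h2, sub_eq_add_neg]
        refine le_trans (abs_add_le _ _) ?_
        rw [abs_neg, abs_mul, abs_mul]
        have h4 : |2/L| = 2/L := abs_of_nonneg (by positivity)
        rw [h4]
        have h5 := hM _ hy01
        have h6 := hK _ hy01
        have h7 : 2/L*|f (W1 L y)| ≤ 2/L*M := mul_le_mul_of_nonneg_left h5 (by positivity)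
        have h8 : |f' (W1 L y)| * |W2 L y| ≤ K*|W2 L y| :=
          mul_le_mul_of_nonneg_right h6 (abs_nonneg _)
        linarith only [h7, h8]
      have h9 : 2/L ≤ 2 := by rw [div_le_iff₀ hL0]; linarith
      have h10 : 2/L*M ≤ 2*M := mul_le_mul_of_nonneg_right h9 hM0
      rw [abs_mul, abs_of_pos hdu] at h3
      rw [le_div_iff₀ hdu]
      linarith only [h3, h10]
    -- Grönwall on [0, X₁]
    have hsubX : Icc (0:ℝ) X₁ ⊆ Icc (0:ℝ) L := Icc_subset_Icc (le_refl 0) (by linarith)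
    have hbnd : ∀ y ∈ Ioo (0:ℝ) X₁,
        2*(W2 L y*W2' L y) + 2*(W2' L y*W2'' L y)
          ≤ Cg*(W2 L y*W2 L y + W2' L y*W2' L y) + R₂*R₂ := by
      intro y hy
      exact aux_quadbound hdu hK0 hM0 (habs'' y (hsubX (Ioo_subset_Icc_self hy)))
        hCgdef hR₂def
    have hgr := aux_gronwall hX₁0.le hCg0 (mul_self_nonneg R₂)
      (fun y hy => (hd1 y (hsubX hy)).mono hsubX)
      (fun y hy => (hd2 y (hsubX hy)).mono hsubX) hbnd
    rw [sub_zero, ← hEgrdef] at hgr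
    -- maximum principle on [X₁, L]
    have hsubX2 : Icc X₁ L ⊆ Icc (0:ℝ) L := Icc_subset_Icc hX₁0.le (le_refl L)
    have hqb : ∀ y ∈ Icc X₁ L, κ ≤ -(f' (W1 L y)) := by
      intro y hy
      have h1 := hf's₁ (W1 L y) (hentry' L hLL₁ y hy.1 hy.2) (hrange y (hsubX2 hy)).2.le
      linarith only [h1]
    have hrb : ∀ y ∈ Icc X₁ L, |2/L * f (W1 L y)| ≤ 2*M/L := by
      intro y hy
      rw [abs_mul, abs_of_nonneg (show (0:ℝ) ≤ 2/L by positivity)]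
      have h5 := hM _ (hrange01 y (hsubX2 hy))
      calc 2/L*|f (W1 L y)| ≤ 2/L*M := mul_le_mul_of_nonneg_left h5 (by positivity)
        _ = 2*M/L := by ring
    have heqmp : ∀ y ∈ Icc X₁ L, du * W2'' L y
        = (-(f' (W1 L y))) * W2 L y + 2/L * f (W1 L y) := by
      intro y hy
      have h1 := heq y (hsubX2 hy)
      linarith only [h1]
    have hmp1 := aux_maxprin (q := fun y => -(f' (W1 L y)))
      (r := fun y => 2/L * f (W1 L y)) hdu hκpos
      (show (0:ℝ) ≤ 2*M/L by positivity)
      (fun y hy => (hd1 y (hsubX2 hy)).mono hsubX2)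
      (fun y hy => (hd2 y (hsubX2 hy)).mono hsubX2)
      heqmp hqb hrb hW2'L L ⟨by linarith, le_refl L⟩
    have heqmp2 : ∀ y ∈ Icc X₁ L, du * (-(W2'' L y))
        = (-(f' (W1 L y))) * (-(W2 L y)) + (-(2/L * f (W1 L y))) := by
      intro y hy
      have h1 := heq y (hsubX2 hy)
      linear_combination -h1
    have hrb2 : ∀ y ∈ Icc X₁ L, |(-(2/L * f (W1 L y)))| ≤ 2*M/L := by
      intro y hy
      rw [abs_neg]
      exact hrb y hy
    have hmp2 := aux_maxprin (g := fun y => -(W2 L y)) (g' := fun y => -(W2' L y))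
      (g'' := fun y => -(W2'' L y)) (q := fun y => -(f' (W1 L y)))
      (r := fun y => -(2/L * f (W1 L y))) hdu hκpos
      (show (0:ℝ) ≤ 2*M/L by positivity)
      (fun y hy => ((hd1 y (hsubX2 hy)).mono hsubX2).neg)
      (fun y hy => ((hd2 y (hsubX2 hy)).mono hsubX2).neg)
      heqmp2 hqb hrb2 (by simp [hW2'L]) L ⟨by linarith, le_refl L⟩
    have hML : 2*M/L ≤ 2*M := by
      rw [div_le_iff₀ hL0]
      have h1 := mul_le_mul_of_nonneg_left hL1 (show (0:ℝ) ≤ 2*M by linarith only [hM0])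
      linarith only [h1]
    have hMLκ : (2*M/L)/κ ≤ v := by
      rw [hvdef]
      exact (div_le_div_iff_of_pos_right hκpos).2 hML
    have hmax1 : W2 L L ≤ |W2 L X₁| + v := by
      refine le_trans hmp1 (max_le ?_ ?_)
      · exact le_trans (le_abs_self _) (le_add_of_nonneg_right hv0)
      · exact le_trans hMLκ (le_add_of_nonneg_left (abs_nonneg _))
    have hmax2 : -(W2 L L) ≤ |W2 L X₁| + v := by
      refine le_trans hmp2 (max_le ?_ ?_)
      · exact le_trans (neg_le_abs _) (le_add_of_nonneg_right hv0)
      · exact le_trans hMLκ (le_add_of_nonneg_left (abs_nonneg _))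
    have hyabs : |W2 L L| ≤ |W2 L X₁| + v :=
      abs_le.2 ⟨by linarith only [hmax2], hmax1⟩
    -- bound on W2'(0)
    have hG1 : |W2' L 0| ≤ a₁ + a₂*(|W2 L L| *ε) := by
      have hfp : |f (γ/α)| ≤ M := hM _ ⟨hp0.le, hp1.le⟩
      have hw'0le := hw'le 0 h0mem
      have h1 : du * W2' L 0 * W1' L 0
          = W2 L L * ε - ((W1' L 0/3) * f (γ/α) + du/L*(W1' L 0 * W1' L 0)) := by
        linarith only [hid]
      have e1 : |W2 L L * ε| = |W2 L L| *ε := by rw [abs_mul, abs_of_nonneg hε0']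
      have e2 : |(W1' L 0/3) * f (γ/α)| ≤ (C₁/3)*M := by
        rw [abs_mul]
        apply mul_le_mul _ hfp (abs_nonneg _) (by linarith only [hC₁0])
        rw [abs_of_nonneg (by linarith only [hw'0pos.le])]
        linarith only [hw'0le]
      have e3 : |du/L*(W1' L 0 * W1' L 0)| ≤ du*(C₁*C₁) := by
        rw [abs_of_nonneg (mul_nonneg (by positivity) (mul_self_nonneg _))]
        have f1 : W1' L 0*W1' L 0 ≤ C₁*C₁ := aux_sqmono (hw'nn 0 h0mem) hw'0le
        have f2 : du/L ≤ du := by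
          rw [div_le_iff₀ hL0]
          have h7 := mul_le_mul_of_nonneg_left hL1 hdu.le
          linarith only [h7]
        calc du/L*(W1' L 0*W1' L 0) ≤ du/L*(C₁*C₁) :=
              mul_le_mul_of_nonneg_left f1 (by positivity)
          _ ≤ du*(C₁*C₁) := mul_le_mul_of_nonneg_right f2 (mul_self_nonneg C₁)
      have h2 : |du * W2' L 0 * W1' L 0| ≤ |W2 L L| *ε + ((C₁/3)*M + du*(C₁*C₁)) := by
        rw [h1]
        refine le_trans (abs_sub _ _) ?_
        have h5 := abs_add_le ((W1' L 0/3) * f (γ/α)) (du/L*(W1' L 0 * W1' L 0))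
        linarith only [e1, h5, e2, e3]
      have h3 : |du * W2' L 0 * W1' L 0| = du*|W2' L 0| *W1' L 0 := by
        rw [abs_mul, abs_mul, abs_of_pos hdu, abs_of_pos hw'0pos]
      rw [h3] at h2
      have h4 : du*|W2' L 0| *c₀ ≤ du*|W2' L 0| *W1' L 0 :=
        mul_le_mul_of_nonneg_left hw'0c₀ (by positivity)
      have h6 : |W2' L 0| ≤ (|W2 L L| *ε + ((C₁/3)*M + du*(C₁*C₁)))*a₂ := by
        rw [ha₂def, mul_one_div, le_div_iff₀ hdc]
        linarith only [h2, h4]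
      calc |W2' L 0| ≤ (|W2 L L| *ε + ((C₁/3)*M + du*(C₁*C₁)))*a₂ := h6
        _ = a₁ + a₂*(|W2 L L| *ε) := by rw [ha₁def]; ring
    -- the absorption argument: a uniform bound on |W2 L L|
    have hyY : |W2 L L| ≤ Y := by
      have hW20sq : W2 L 0*W2 L 0 ≤ (C₁/3)*(C₁/3) := by
        rw [hW20]
        exact aux_sqmono (by linarith only [hw'nn 0 h0mem])
          (by linarith only [hw'le 0 h0mem])
      have hW2'0sq : W2' L 0*W2' L 0
          ≤ (a₁ + a₂*(|W2 L L| *ε))*(a₁ + a₂*(|W2 L L| *ε)) := by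
        rw [← abs_mul_abs_self (W2' L 0)]
        exact aux_sqmono (abs_nonneg _) hG1
      have hy0 : 0 ≤ |W2 L L| := abs_nonneg _
      have htwo := aux_two_sq a₁ (a₂*(|W2 L L| *ε))
      have hρ0 : W2 L 0*W2 L 0 + W2' L 0*W2' L 0
          ≤ (C₁/3)*(C₁/3) + 2*(a₁*a₁) + 2*((a₂*(|W2 L L| *ε))*(a₂*(|W2 L L| *ε))) := by
        linarith only [hW20sq, hW2'0sq, htwo]
      have hstep1 : W2 L X₁*W2 L X₁ + W2' L X₁*W2' L X₁
          ≤ ((C₁/3)*(C₁/3) + 2*(a₁*a₁) + 2*((a₂*(|W2 L L| *ε))*(a₂*(|W2 L L| *ε)))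
            + R₂*R₂*X₁)*Egr :=
        le_trans hgr (mul_le_mul_of_nonneg_right (by linarith only [hρ0]) hEgr0.le)
      have hstep2 : |W2 L L| *|W2 L L|
          ≤ 2*(((C₁/3)*(C₁/3) + 2*(a₁*a₁) + 2*((a₂*(|W2 L L| *ε))*(a₂*(|W2 L L| *ε)))
            + R₂*R₂*X₁)*Egr) + 2*(v*v) := by
        have hq := aux_addsq hy0 hyabs
        have habs2 : |W2 L X₁| * |W2 L X₁| = W2 L X₁*W2 L X₁ := abs_mul_abs_self _
        have hpos := mul_self_nonneg (W2' L X₁)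
        linarith only [hq, habs2, hpos, hstep1]
      have hεterm : 2*(((C₁/3)*(C₁/3) + 2*(a₁*a₁) + 2*((a₂*(|W2 L L| *ε))*(a₂*(|W2 L L| *ε)))
            + R₂*R₂*X₁)*Egr)
          = 2*(((C₁/3)*(C₁/3) + 2*(a₁*a₁) + R₂*R₂*X₁)*Egr)
            + (4*((a₂*ε)*(a₂*ε))*Egr)*(|W2 L L| *|W2 L L|) := by ring
      rw [hεterm] at hstep2
      have hkey := hεkey ε hε0' hεs
      have hprod : (4*((a₂*ε)*(a₂*ε))*Egr)*(|W2 L L| *|W2 L L|)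
          ≤ (1/2)*(|W2 L L| *|W2 L L|) :=
        mul_le_mul_of_nonneg_right hkey (mul_self_nonneg _)
      have hfin : |W2 L L| *|W2 L L| ≤ Ysq := by
        rw [hYsqdef]
        linarith only [hstep2, hprod]
      exact aux_sqle hy0 hY0 (by rw [hYsq]; exact hfin)
    -- final assembly
    have hcLb : |W2 L L * ε| ≤ Y*ε := by
      rw [abs_mul, abs_of_nonneg hε0']
      exact mul_le_mul_of_nonneg_right hyY hε0'
    have hA : (du * W2' L 0 + 1/3 * f (γ/α)) * W1' L 0
        = W2 L L * ε - du/L*(W1' L 0*W1' L 0) := by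
      linear_combination hid
    rw [le_div_iff₀ hc₀0]
    have habs0 : |du * W2' L 0 + 1/3 * f (γ/α)| * c₀
        ≤ |du * W2' L 0 + 1/3 * f (γ/α)| * W1' L 0 :=
      mul_le_mul_of_nonneg_left hw'0c₀ (abs_nonneg _)
    have habs1 : |du * W2' L 0 + 1/3 * f (γ/α)| * W1' L 0
        = |(du * W2' L 0 + 1/3 * f (γ/α)) * W1' L 0| := by
      rw [abs_mul, abs_of_pos hw'0pos]
    have habs2 : |(du * W2' L 0 + 1/3 * f (γ/α)) * W1' L 0| ≤ Y*ε + du*(C₁*C₁)/L := by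
      rw [hA]
      have t1 := abs_sub (W2 L L * ε) (du/L*(W1' L 0*W1' L 0))
      have t2 : |du/L*(W1' L 0*W1' L 0)| ≤ du*(C₁*C₁)/L := by
        rw [abs_of_nonneg (mul_nonneg (by positivity) (mul_self_nonneg _))]
        have f1 : W1' L 0*W1' L 0 ≤ C₁*C₁ := aux_sqmono (hw'nn 0 h0mem) (hw'le 0 h0mem)
        calc du/L*(W1' L 0*W1' L 0) ≤ du/L*(C₁*C₁) :=
              mul_le_mul_of_nonneg_left f1 (by positivity)
          _ = du*(C₁*C₁)/L := by ring
      linarith only [t1, t2, hcLb]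
    linarith only [habs0, habs1, habs2]
  -- conclusion
  have hboundlim : Tendsto (fun L => (Y * f (W1 L L) + du*(C₁*C₁)/L)/c₀) atTop (nhds 0) := by
    have h1 : Tendsto (fun L => Y * f (W1 L L)) atTop (nhds 0) := by
      have := hεlim.const_mul Y
      simpa using this
    have h2 : Tendsto (fun L : ℝ => du*(C₁*C₁)/L) atTop (nhds 0) :=
      Filter.Tendsto.div_atTop tendsto_const_nhds tendsto_id
    have h3 := (h1.add h2).div_const c₀
    simpa using h3
  have h0 : Tendsto (fun L => du * W2' L 0 + 1/3 * f (γ/α)) atTop (nhds 0) := by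
    apply squeeze_zero_norm' _ hboundlim
    have he2 : ∀ᶠ L in atTop, f (W1 L L) ≤ ε₀ :=
      (hεlim.eventually_lt_const hε₀0).mono (fun L h => h.le)
    filter_upwards [eventually_ge_atTop L₁, he2] with L h1 h2
    rw [Real.norm_eq_abs]
    exact hmain L h1 h2
  have hmain1 : Tendsto (fun L => du * W2' L 0) atTop (nhds (-(1/3) * f (γ/α))) := by
    have h := h0.sub_const (1/3 * f (γ/α))
    simp only [add_sub_cancel_right] at h
    convert h using 2
    ring
  refine ⟨hmain1, ?_⟩
  have h2fin := (hmain1.add_const (f (γ/α))).const_mul (α/(β*γ))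
  convert h2fin using 2
  ring
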